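/- Let a reaction network N be given by α, β ∈ ℕ^{n×ν} with Γ = β − α, admissible Jacobian set 𝒦, and r = rank Γ. Assume N has no catalytic reactions (for all i, j, not both α_{ij} > 0 and β_{ij} > 0). Fix a species i and let Ñ be obtained from N by adding a dimer X_i⁺: Ñ has n+1 species and the same ν reactions, where rows 1,…,n of α̃ and β̃ equal those of α and β, row n+1 of α̃ equals row i of α, and row n+1 of β̃ equals row i of β. Set Γ̃ = β̃ − α̃, r̃ = rank Γ̃, and let 𝒦̃ be the admissible Jacobian set of Ñ. Assume: N is robustly P0; N is robustly non-degenerate; and Ñ is robustly P0. Then Ñ is robustly non-degenerate: for every Ṽ ∈ 𝒦̃ the sum of all r̃×r̃ principal minors of −Γ̃Ṽ is nonzero. -/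

import Mathlib

open Matrix Finset

/-- The principal minor of a square matrix `M` indexed by the set `I`. -/
noncomputable def principalMinor {n : ℕ} (M : Matrix (Fin n) (Fin n) ℝ) (I : Finset (Fin n)) : ℝ :=
  (M.submatrix (fun i : {x // x ∈ I} => (i : Fin n)) (fun i : {x // x ∈ I} => (i : Fin n))).det

/-- The sum of all `r × r` principal minors of the square matrix `M`. -/
noncomputable def sumMinors {n : ℕ} (r : ℕ) (M : Matrix (Fin n) (Fin n) ℝ) : ℝ :=
  ∑ I ∈ Finset.univ.powersetCard r, principalMinor M I

/-- The admissible Jacobian set: `V j i > 0` whenever `X i` is a reactant of reaction `j`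
    (i.e. `α i j > 0`) and `V j i = 0` otherwise. -/
def admissible {n ν : ℕ} (α : Matrix (Fin n) (Fin ν) ℕ) (V : Matrix (Fin ν) (Fin n) ℝ) : Prop :=
  ∀ i j, (0 < α i j → 0 < V j i) ∧ (α i j = 0 → V j i = 0)

/-- The stoichiometry matrix `Γ = β - α` (entries cast to `ℝ`). -/
def gam {n ν : ℕ} (α β : Matrix (Fin n) (Fin ν) ℕ) : Matrix (Fin n) (Fin ν) ℝ :=
  fun i j => (β i j : ℝ) - (α i j : ℝ)

/-- Principal minor on the image of an injective map equals det of the submatrix. -/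
lemma pm_image {m r : ℕ} (M : Matrix (Fin m) (Fin m) ℝ) (f : Fin r → Fin m)
    (hf : Function.Injective f) :
    principalMinor M (Finset.univ.image f) = (M.submatrix f f).det := by
  set I : Finset (Fin m) := Finset.univ.image f with hI
  have hmem : ∀ s, f s ∈ I := fun s => Finset.mem_image_of_mem f (Finset.mem_univ s)
  have hcard : Fintype.card {x // x ∈ I} = r := by
    rw [Fintype.card_coe, Finset.card_image_of_injective _ hf, Finset.card_univ,
      Fintype.card_fin]
  let f' : Fin r → {x // x ∈ I} := fun s => ⟨f s, hmem s⟩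
  have hf' : Function.Bijective f' := by
    rw [Fintype.bijective_iff_injective_and_card]
    exact ⟨fun a b hab => hf (congrArg Subtype.val hab), by rw [hcard, Fintype.card_fin]⟩
  let φ : Fin r ≃ {x // x ∈ I} := Equiv.ofBijective f' hf'
  have : M.submatrix f f =
      (M.submatrix (fun i : {x // x ∈ I} => (i : Fin m))
        (fun i : {x // x ∈ I} => (i : Fin m))).submatrix φ φ := by
    ext s s'
    simp [φ, Equiv.ofBijective_apply, f']
  rw [principalMinor, this, Matrix.det_submatrix_equiv_self]

lemma image_orderEmbOfFin {m r : ℕ} (J : Finset (Fin m)) (hJ : J.card = r) :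
    Finset.univ.image (J.orderEmbOfFin hJ) = J := by
  apply Finset.coe_injective
  rw [Finset.coe_image, Finset.coe_univ, Set.image_univ]
  exact J.range_orderEmbOfFin hJ

/-- Principal minor of a principal submatrix. -/
lemma pm_submatrix {m m' : ℕ} (M : Matrix (Fin m') (Fin m') ℝ) (c : Fin m → Fin m')
    (hc : Function.Injective c) (J : Finset (Fin m)) :
    principalMinor M (J.image c) = principalMinor (M.submatrix c c) J := by
  set g : Fin J.card → Fin m := ⇑(J.orderEmbOfFin rfl) with hg
  have hginj : Function.Injective g := (J.orderEmbOfFin rfl).injective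
  have hgJ : Finset.univ.image g = J := image_orderEmbOfFin J rfl
  have e1 := pm_image M (c ∘ g) (hc.comp hginj)
  have himg : Finset.univ.image (c ∘ g) = J.image c := by
    rw [← Finset.image_image, hgJ]
  rw [himg] at e1
  have e2 := pm_image (M.submatrix c c) g hginj
  rw [hgJ] at e2
  rw [e1, e2, Matrix.submatrix_submatrix]

/-- Principal minors depend only on entries in `I × I`. -/
lemma pm_congr {m : ℕ} (M A : Matrix (Fin m) (Fin m) ℝ) (I : Finset (Fin m))
    (h : ∀ x ∈ I, ∀ y ∈ I, M x y = A x y) : principalMinor M I = principalMinor A I := by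
  unfold principalMinor
  congr 1
  ext s s'
  exact h _ s.2 _ s'.2

lemma pm_zero_of_rows_eq {m : ℕ} (M : Matrix (Fin m) (Fin m) ℝ) (x y : Fin m)
    (hxy : x ≠ y) (hrow : ∀ z, M x z = M y z) (I : Finset (Fin m))
    (hx : x ∈ I) (hy : y ∈ I) : principalMinor M I = 0 := by
  apply Matrix.det_zero_of_row_eq (i := (⟨x, hx⟩ : {a // a ∈ I})) (j := ⟨y, hy⟩)
  · exact fun h => hxy (congrArg Subtype.val h)
  · funext s; exact hrow s

/-- Multilinearity of principal minors in column `i0`. -/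
lemma pm_split {m : ℕ} (M A B : Matrix (Fin m) (Fin m) ℝ) (i0 : Fin m)
    (hA : ∀ i i', i' ≠ i0 → A i i' = M i i')
    (hB : ∀ i i', i' ≠ i0 → B i i' = M i i')
    (hsum : ∀ i, M i i0 = A i i0 + B i i0)
    (J : Finset (Fin m)) (hi0 : i0 ∈ J) :
    principalMinor M J = principalMinor A J + principalMinor B J := by
  set g : Fin J.card → Fin m := ⇑(J.orderEmbOfFin rfl) with hg
  have hginj : Function.Injective g := (J.orderEmbOfFin rfl).injective
  have hgJ : Finset.univ.image g = J := image_orderEmbOfFin J rfl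
  obtain ⟨t, -, ht⟩ : ∃ t, ∃ _ : t ∈ Finset.univ, g t = i0 := by
    rw [← hgJ] at hi0
    simpa using Finset.mem_image.mp hi0
  have keyM : M.submatrix g g =
      Matrix.updateCol (M.submatrix g g) t
        ((fun s => A (g s) i0) + fun s => B (g s) i0) := by
    ext s s'
    rw [Matrix.updateCol_apply]
    by_cases h : s' = t
    · subst h; simp [ht, hsum (g s)]
    · simp [h]
  have keyA : A.submatrix g g =
      Matrix.updateCol (M.submatrix g g) t (fun s => A (g s) i0) := by
    ext s s'
    rw [Matrix.updateCol_apply]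
    by_cases h : s' = t
    · subst h; simp [ht]
    · simp only [if_neg h, Matrix.submatrix_apply]
      exact hA _ _ (fun he => h (hginj (ht ▸ he)))
  have keyB : B.submatrix g g =
      Matrix.updateCol (M.submatrix g g) t (fun s => B (g s) i0) := by
    ext s s'
    rw [Matrix.updateCol_apply]
    by_cases h : s' = t
    · subst h; simp [ht]
    · simp only [if_neg h, Matrix.submatrix_apply]
      exact hB _ _ (fun he => h (hginj (ht ▸ he)))
  have := Matrix.det_updateCol_add (M.submatrix g g) t
    (fun s => A (g s) i0) (fun s => B (g s) i0)
  have pmM := pm_image M g hginj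
  have pmA := pm_image A g hginj
  have pmB := pm_image B g hginj
  rw [hgJ] at pmM pmA pmB
  rw [pmM, pmA, pmB, keyM, this, ← keyA, ← keyB]

/-- Robust non-degeneracy is preserved by adding a dimer species `X i⁺`
(a reactant/product exactly where `X i` is), for robustly `P₀` networks
without catalytic reactions. -/
theorem nondeg_add_dimer (n ν : ℕ) (α β : Matrix (Fin n) (Fin ν) ℕ)
    (hcat : ∀ i j, ¬(0 < α i j ∧ 0 < β i j))
    (i0 : Fin n)
    (αt βt : Matrix (Fin (n + 1)) (Fin ν) ℕ)
    (hαold : ∀ (i : Fin n) (j : Fin ν), αt i.castSucc j = α i j)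
    (hβold : ∀ (i : Fin n) (j : Fin ν), βt i.castSucc j = β i j)
    (hαnew : ∀ j : Fin ν, αt (Fin.last n) j = α i0 j)
    (hβnew : ∀ j : Fin ν, βt (Fin.last n) j = β i0 j)
    (hP0 : ∀ V, admissible α V → ∀ I : Finset (Fin n),
      0 ≤ principalMinor (-(gam α β * V)) I)
    (hND : ∀ V, admissible α V →
      sumMinors (gam α β).rank (-(gam α β * V)) ≠ 0)
    (hP0t : ∀ V, admissible αt V → ∀ I : Finset (Fin (n + 1)),
      0 ≤ principalMinor (-(gam αt βt * V)) I) :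
    ∀ V, admissible αt V →
      sumMinors (gam αt βt).rank (-(gam αt βt * V)) ≠ 0 := by
  classical
  intro Vt hVt
  set Γ : Matrix (Fin n) (Fin ν) ℝ := gam α β with hΓ
  set Γt : Matrix (Fin (n + 1)) (Fin ν) ℝ := gam αt βt with hΓt
  set c : Fin n → Fin (n + 1) := Fin.castSucc with hcdef
  set l : Fin (n + 1) := Fin.last n with hldef
  have hcl : ∀ i : Fin n, c i ≠ l := fun i => (Fin.castSucc_lt_last i).ne
  have hcinj : Function.Injective c := Fin.castSucc_injective n
  -- the retraction p
  set p : Fin (n + 1) → Fin n := fun x => if h : x = l then i0 else x.castPred h with hpdef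
  have hpc : ∀ i, p (c i) = i := by
    intro i
    simp only [hpdef, dif_neg (hcl i)]
    exact Fin.castPred_castSucc _
  have hpl : p l = i0 := by simp [hpdef]
  have hcp : ∀ x, x ≠ l → c (p x) = x := by
    intro x hx
    simp only [hpdef, dif_neg hx]
    exact Fin.castSucc_castPred x hx
  -- rows of Γt are rows of Γ via p
  have hrowt : ∀ x j, Γt x j = Γ (p x) j := by
    intro x j
    refine Fin.lastCases ?_ ?_ x
    · rw [show p l = i0 from hpl]
      simp only [hΓt, hΓ, gam, hαnew j, hβnew j]
      exact congrArg₂ (fun a b : ℕ => (a : ℝ) - (b : ℝ)) (hβnew j) (hαnew j)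
    · intro i
      rw [show p (c i) = i from hpc i]
      simp only [hΓt, hΓ, gam, hαold i j, hβold i j]
      exact congrArg₂ (fun a b : ℕ => (a : ℝ) - (b : ℝ)) (hβold i j) (hαold i j)
  -- rank equality
  have hrank : Γt.rank = Γ.rank := by
    have h1 : Γt =
        (Matrix.of fun (x : Fin (n + 1)) (i : Fin n) => if i = p x then (1 : ℝ) else 0) * Γ := by
      ext x j
      rw [Matrix.mul_apply, Finset.sum_eq_single (p x)]
      · simp [hrowt x j]
      · intro b _ hb; simp [hb]
      · simp
    have h2 : Γ =
        (Matrix.of fun (i : Fin n) (x : Fin (n + 1)) => if x = c i then (1 : ℝ) else 0) * Γt := by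
      ext i j
      rw [Matrix.mul_apply, Finset.sum_eq_single (c i)]
      · simp [hrowt, hpc]
      · intro b _ hb; simp [hb]
      · simp
    apply le_antisymm
    · conv_lhs => rw [h1]
      exact Matrix.rank_mul_le_right _ _
    · conv_lhs => rw [h2]
      exact Matrix.rank_mul_le_right _ _
  -- the merged Jacobian matrix
  set V : Matrix (Fin ν) (Fin n) ℝ :=
    fun j i => if i = i0 then Vt j (c i0) + Vt j l else Vt j (c i) with hVdef
  have hadm : admissible α V := by
    intro i j
    constructor
    · intro hpos
      by_cases h : i = i0
      · have hpos' : 0 < α i0 j := h ▸ hpos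
        simp only [hVdef, if_pos h]
        exact add_pos ((hVt (c i0) j).1 ((hαold i0 j).symm ▸ hpos'))
          ((hVt l j).1 ((hαnew j).symm ▸ hpos'))
      · simp only [hVdef, if_neg h]
        exact (hVt (c i) j).1 ((hαold i j).symm ▸ hpos)
    · intro h0
      by_cases h : i = i0
      · have h0' : α i0 j = 0 := h ▸ h0
        simp only [hVdef, if_pos h]
        rw [(hVt (c i0) j).2 ((hαold i0 j).symm ▸ h0'),
          (hVt l j).2 ((hαnew j).symm ▸ h0'), add_zero]
      · simp only [hVdef, if_neg h]
        exact (hVt (c i) j).2 ((hαold i j).symm ▸ h0)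
  set Mt : Matrix (Fin (n + 1)) (Fin (n + 1)) ℝ := -(Γt * Vt) with hMtdef
  set MM : Matrix (Fin n) (Fin n) ℝ := -(Γ * V) with hMMdef
  set d : Fin n → Fin (n + 1) := fun i => if i = i0 then l else c i with hddef
  have hdinj : Function.Injective d := by
    intro a b hab
    simp only [hddef] at hab
    split_ifs at hab with ha hb hb
    · exact ha.trans hb.symm
    · exact absurd hab.symm (hcl b)
    · exact absurd hab (hcl a)
    · exact hcinj hab
  have hpd : ∀ i, p (d i) = i := by
    intro i
    by_cases h : i = i0
    · subst h; simp only [hddef, if_pos rfl, hpl]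
    · simp only [hddef, if_neg h, hpc]
  set A : Matrix (Fin n) (Fin n) ℝ := Mt.submatrix c c with hAdef
  set B : Matrix (Fin n) (Fin n) ℝ := Mt.submatrix d d with hBdef
  -- entrywise descriptions
  have hMte : ∀ x y, Mt x y = -(∑ j, Γ (p x) j * Vt j y) := by
    intro x y
    simp only [hMtdef, Matrix.neg_apply, Matrix.mul_apply, neg_inj]
    exact Finset.sum_congr rfl fun j _ => by rw [hrowt]
  have hrowkl : ∀ z, Mt (c i0) z = Mt l z := by
    intro z; rw [hMte, hMte, hpc, hpl]
  have hAM : ∀ i i', i' ≠ i0 → A i i' = MM i i' := by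
    intro i i' h
    simp only [hAdef, Matrix.submatrix_apply, hMte, hpc, hMMdef, Matrix.neg_apply,
      Matrix.mul_apply, neg_inj]
    refine Finset.sum_congr rfl fun j _ => ?_
    simp [hVdef, h]
  have hBM : ∀ i i', i' ≠ i0 → B i i' = MM i i' := by
    intro i i' h
    simp only [hBdef, Matrix.submatrix_apply, hMte, hpd, hMMdef, Matrix.neg_apply,
      Matrix.mul_apply, neg_inj]
    refine Finset.sum_congr rfl fun j _ => ?_
    simp [hVdef, hddef, h]
  have hsumM : ∀ i, MM i i0 = A i i0 + B i i0 := by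
    intro i
    simp only [hAdef, hBdef, Matrix.submatrix_apply, hMte, hpc, hpd, hMMdef,
      Matrix.neg_apply, Matrix.mul_apply]
    rw [← neg_add, ← Finset.sum_add_distrib]
    congr 1
    refine Finset.sum_congr rfl fun j _ => ?_
    have hdi0 : d i0 = l := by simp [hddef]
    simp [hVdef, hdi0, mul_add]
  -- the key sum identity
  have key : ∀ r : ℕ, sumMinors r Mt = sumMinors r MM := by
    intro r
    unfold sumMinors
    have step1 := (Finset.sum_filter_add_sum_filter_not
      ((Finset.univ : Finset (Fin (n + 1))).powersetCard r) (fun I => l ∈ I)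
      (principalMinor Mt)).symm
    have hz : ∑ I ∈ (((Finset.univ : Finset (Fin (n + 1))).powersetCard r).filter
        (fun I => l ∈ I)).filter (fun I => c i0 ∈ I), principalMinor Mt I = 0 := by
      apply Finset.sum_eq_zero
      intro I hI
      simp only [Finset.mem_filter] at hI
      exact pm_zero_of_rows_eq Mt (c i0) l (hcl i0) hrowkl I hI.2 hI.1.2
    have step2 : ∑ I ∈ ((Finset.univ : Finset (Fin (n + 1))).powersetCard r).filter
          (fun I => l ∈ I), principalMinor Mt I
        = ∑ I ∈ ((Finset.univ : Finset (Fin (n + 1))).powersetCard r).filter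
          (fun I => l ∈ I ∧ ¬ c i0 ∈ I), principalMinor Mt I := by
      rw [← Finset.sum_filter_add_sum_filter_not
        ((((Finset.univ : Finset (Fin (n + 1))).powersetCard r)).filter (fun I => l ∈ I))
        (fun I => c i0 ∈ I) (principalMinor Mt), hz, zero_add, Finset.filter_filter]
    have step3 : ∑ J ∈ (Finset.univ : Finset (Fin n)).powersetCard r, principalMinor A J
        = ∑ I ∈ ((Finset.univ : Finset (Fin (n + 1))).powersetCard r).filter
          (fun I => ¬ l ∈ I), principalMinor Mt I := by
      apply Finset.sum_bij (fun J _ => J.image c)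
      · intro J hJ
        rw [Finset.mem_powersetCard_univ] at hJ
        simp only [Finset.mem_filter, Finset.mem_powersetCard_univ]
        refine ⟨by rw [Finset.card_image_of_injective _ hcinj]; exact hJ, ?_⟩
        intro hmem
        obtain ⟨i, _, hi⟩ := Finset.mem_image.mp hmem
        exact hcl i hi
      · intro a ha b hb hab
        exact Finset.image_injective hcinj hab
      · intro I hI
        simp only [Finset.mem_filter, Finset.mem_powersetCard_univ] at hI
        have hsec : ∀ x ∈ I, c (p x) = x := fun x hx =>
          hcp x (fun h => hI.2 (h ▸ hx))
        have hinj : Set.InjOn p I := fun x hx y hy hxy => by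
          rw [← hsec x hx, ← hsec y hy, hxy]
        refine ⟨I.image p, ?_, ?_⟩
        · rw [Finset.mem_powersetCard_univ, Finset.card_image_of_injOn hinj]
          exact hI.1
        · rw [Finset.image_image]
          calc I.image (c ∘ p) = I.image id := Finset.image_congr fun x hx => hsec x hx
            _ = I := Finset.image_id
      · intro J hJ
        exact (pm_submatrix Mt c hcinj J).symm
    have step4 : ∑ J ∈ ((Finset.univ : Finset (Fin n)).powersetCard r).filter
          (fun J => i0 ∈ J), principalMinor B J
        = ∑ I ∈ ((Finset.univ : Finset (Fin (n + 1))).powersetCard r).filter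
          (fun I => l ∈ I ∧ ¬ c i0 ∈ I), principalMinor Mt I := by
      apply Finset.sum_bij (fun J _ => J.image d)
      · intro J hJ
        simp only [Finset.mem_filter, Finset.mem_powersetCard_univ] at hJ ⊢
        refine ⟨by rw [Finset.card_image_of_injective _ hdinj]; exact hJ.1, ?_, ?_⟩
        · exact Finset.mem_image.mpr ⟨i0, hJ.2, by simp [hddef]⟩
        · intro hmem
          obtain ⟨i, _, hi⟩ := Finset.mem_image.mp hmem
          by_cases h : i = i0
          · simp only [hddef, if_pos h] at hi
            exact hcl i0 hi.symm
          · simp only [hddef, if_neg h] at hi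
            exact h (hcinj hi)
      · intro a ha b hb hab
        exact Finset.image_injective hdinj hab
      · intro I hI
        simp only [Finset.mem_filter, Finset.mem_powersetCard_univ] at hI
        obtain ⟨hIcard, hIl, hIk⟩ := hI
        have hsec : ∀ x ∈ I, d (p x) = x := by
          intro x hx
          by_cases hxl : x = l
          · subst hxl
            rw [hpl]
            simp [hddef]
          · have hpxne : p x ≠ i0 := by
              intro h
              apply hIk
              have hx' : x = c i0 := by rw [← h, hcp x hxl]
              exact hx' ▸ hx
            rw [hddef]
            simp only [if_neg hpxne]
            exact hcp x hxl
        have hinj : Set.InjOn p I := fun x hx y hy hxy => by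
          rw [← hsec x hx, ← hsec y hy, hxy]
        refine ⟨I.image p, ?_, ?_⟩
        · simp only [Finset.mem_filter, Finset.mem_powersetCard_univ]
          exact ⟨by rw [Finset.card_image_of_injOn hinj]; exact hIcard,
            Finset.mem_image.mpr ⟨l, hIl, hpl⟩⟩
        · rw [Finset.image_image]
          calc I.image (d ∘ p) = I.image id := Finset.image_congr fun x hx => hsec x hx
            _ = I := Finset.image_id
      · intro J hJ
        exact (pm_submatrix Mt d hdinj J).symm
    have step5 : ∑ J ∈ (Finset.univ : Finset (Fin n)).powersetCard r, principalMinor MM J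
        = (∑ J ∈ (Finset.univ : Finset (Fin n)).powersetCard r, principalMinor A J)
        + ∑ J ∈ ((Finset.univ : Finset (Fin n)).powersetCard r).filter
            (fun J => i0 ∈ J), principalMinor B J := by
      rw [← Finset.sum_filter_add_sum_filter_not
        ((Finset.univ : Finset (Fin n)).powersetCard r) (fun J => i0 ∈ J) (principalMinor MM),
        ← Finset.sum_filter_add_sum_filter_not
        ((Finset.univ : Finset (Fin n)).powersetCard r) (fun J => i0 ∈ J) (principalMinor A)]
      have e1 : ∑ J ∈ ((Finset.univ : Finset (Fin n)).powersetCard r).filter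
            (fun J => i0 ∈ J), principalMinor MM J
          = ∑ J ∈ ((Finset.univ : Finset (Fin n)).powersetCard r).filter
            (fun J => i0 ∈ J), (principalMinor A J + principalMinor B J) := by
        refine Finset.sum_congr rfl fun J hJ => ?_
        exact pm_split MM A B i0 hAM hBM hsumM J (Finset.mem_filter.mp hJ).2
      have e2 : ∑ J ∈ ((Finset.univ : Finset (Fin n)).powersetCard r).filter
            (fun J => ¬ i0 ∈ J), principalMinor MM J
          = ∑ J ∈ ((Finset.univ : Finset (Fin n)).powersetCard r).filter
            (fun J => ¬ i0 ∈ J), principalMinor A J := by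
        refine Finset.sum_congr rfl fun J hJ => ?_
        have hJ' := (Finset.mem_filter.mp hJ).2
        exact pm_congr MM A J fun x _ y hy => (hAM x y (fun h => hJ' (h ▸ hy))).symm
      rw [e1, e2, Finset.sum_add_distrib]
      ring
    calc ∑ I ∈ (Finset.univ : Finset (Fin (n + 1))).powersetCard r, principalMinor Mt I
        = (∑ I ∈ ((Finset.univ : Finset (Fin (n + 1))).powersetCard r).filter
            (fun I => l ∈ I), principalMinor Mt I)
          + ∑ I ∈ ((Finset.univ : Finset (Fin (n + 1))).powersetCard r).filter
            (fun I => ¬ l ∈ I), principalMinor Mt I := step1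
      _ = (∑ J ∈ ((Finset.univ : Finset (Fin n)).powersetCard r).filter
            (fun J => i0 ∈ J), principalMinor B J)
          + ∑ J ∈ (Finset.univ : Finset (Fin n)).powersetCard r, principalMinor A J := by
          rw [step2, ← step3, ← step4]
      _ = ∑ J ∈ (Finset.univ : Finset (Fin n)).powersetCard r, principalMinor MM J := by
          rw [step5]; ring
  rw [hrank, key]
  exact hND V hadm
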